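/- Let λ ∈ ℝ^d be a nonzero vector. The additive subgroup λ·ℤ^d = {λ·x : x ∈ ℤ^d} of ℝ is equal to c·ℤ for some real c > 0 if and only if λ is a nonzero real scalar multiple of a vector with rational coordinates. -/

import Mathlib

private lemma abs_set_eq_aux (u : ℝ) :
    {r : ℝ | ∃ k : ℤ, r = u * k} = {r : ℝ | ∃ k : ℤ, r = |u| * k} := by
  rcases abs_cases u with ⟨h, _⟩ | ⟨h, _⟩
  · rw [h]
  · rw [h]
    ext r
    constructor
    · rintro ⟨k, rfl⟩; exact ⟨-k, by push_cast; ring⟩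
    · rintro ⟨k, rfl⟩; exact ⟨-k, by push_cast; ring⟩

/-- For nonzero `l ∈ ℝ^d`, the subgroup `l·ℤ^d ⊆ ℝ` equals `c·ℤ` for some `c > 0`
iff `l` is a nonzero real scalar multiple of a rational vector. -/
theorem stmt_2 (d : ℕ) (l : Fin d → ℝ) (hl : l ≠ 0) :
    (∃ c : ℝ, 0 < c ∧
        {r : ℝ | ∃ x : Fin d → ℤ, r = ∑ i, l i * (x i : ℝ)} =
          {r : ℝ | ∃ k : ℤ, r = c * (k : ℝ)}) ↔
      ∃ (t : ℝ) (q : Fin d → ℚ), t ≠ 0 ∧ l = fun i => t * (q i : ℝ) := by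
  constructor
  · rintro ⟨c, hc, hset⟩
    have key : ∀ i, ∃ k : ℤ, l i = c * k := by
      intro i
      have hmem : l i ∈ {r : ℝ | ∃ x : Fin d → ℤ, r = ∑ j, l j * (x j : ℝ)} := by
        refine ⟨Pi.single i 1, ?_⟩
        rw [Finset.sum_eq_single i]
        · simp
        · intro j _ hj; simp [Pi.single_eq_of_ne hj]
        · simp
      rw [hset] at hmem
      exact hmem
    choose k hk using key
    exact ⟨c, fun i => (k i : ℚ), ne_of_gt hc,
      funext fun i => by rw [hk i]; push_cast; ring⟩
  · rintro ⟨t, q, ht, rfl⟩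
    obtain ⟨i0, hi0⟩ : ∃ i, t * (q i : ℝ) ≠ 0 := by
      simpa [Function.ne_iff] using hl
    have hq0 : q i0 ≠ 0 := by
      intro h; apply hi0; rw [h]; simp
    set N : ℤ := ∏ i, ((q i).den : ℤ) with hN
    have hNpos : 0 < N := Finset.prod_pos fun i _ => by positivity
    have hNR : (N : ℝ) ≠ 0 := by exact_mod_cast hNpos.ne'
    have hdvd : ∀ i, ((q i).den : ℤ) ∣ N :=
      fun i => Finset.dvd_prod_of_mem _ (Finset.mem_univ i)
    choose m hm using hdvd
    set a : Fin d → ℤ := fun i => (q i).num * m i with haDef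
    have haQ : ∀ i, ((a i : ℤ) : ℚ) = q i * (N : ℚ) := by
      intro i
      have h1 : ((q i).num : ℚ) = q i * ((q i).den : ℚ) := (Rat.mul_den_eq_num (q i)).symm
      have h2 : ((N : ℤ) : ℚ) = ((q i).den : ℚ) * (m i : ℚ) := by
        exact_mod_cast congrArg (fun z : ℤ => (z : ℚ)) (hm i)
      simp only [haDef]
      push_cast
      rw [h1, h2]; ring
    have haR : ∀ i, ((a i : ℤ) : ℝ) = (q i : ℝ) * (N : ℝ) := by
      intro i
      have := congrArg (fun z : ℚ => (z : ℝ)) (haQ i)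
      push_cast at this
      exact this
    set s : ℝ := t / N with hs
    have hsne : s ≠ 0 := div_ne_zero ht hNR
    obtain ⟨g, hg⟩ := Submodule.IsPrincipal.principal (Ideal.span (Set.range a))
    have hg' : Ideal.span (Set.range a) = Ideal.span {g} := hg
    have hmemI : ∀ x : ℤ, x ∈ Ideal.span (Set.range a) ↔
        ∃ v : Fin d → ℤ, ∑ i, v i * a i = x := by
      intro x
      rw [Ideal.span, Submodule.mem_span_range_iff_exists_fun]
      simp [smul_eq_mul]
    have hgne : g ≠ 0 := by
      intro h
      have ha0 : a i0 ≠ 0 := by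
        intro h0
        apply hq0
        have := haQ i0
        rw [h0] at this
        have hNQ : ((N : ℤ) : ℚ) ≠ 0 := by exact_mod_cast hNpos.ne'
        field_simp at this
        exact (mul_eq_zero.mp (by exact_mod_cast this.symm)).resolve_right hNQ
      have : a i0 ∈ Ideal.span (Set.range a) := Ideal.subset_span ⟨i0, rfl⟩
      rw [hg', Ideal.mem_span_singleton, h] at this
      exact ha0 (zero_dvd_iff.mp this)
    have hterm : ∀ (x : Fin d → ℤ) (i : Fin d),
        (t * (q i : ℝ)) * (x i : ℝ) = s * ((x i : ℝ) * ((a i : ℤ) : ℝ)) := by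
      intro x i
      rw [haR i, hs]
      field_simp
    have hsum : ∀ x : Fin d → ℤ,
        ∑ i, (t * (q i : ℝ)) * (x i : ℝ) = s * ((∑ i, x i * a i : ℤ) : ℝ) := by
      intro x
      push_cast
      rw [Finset.mul_sum]
      exact Finset.sum_congr rfl fun i _ => hterm x i
    refine ⟨|s * (g : ℝ)|, abs_pos.mpr (mul_ne_zero hsne (by exact_mod_cast hgne)), ?_⟩
    rw [← abs_set_eq_aux (s * (g : ℝ))]
    ext r
    constructor
    · rintro ⟨x, rfl⟩
      have hM : (∑ i, x i * a i) ∈ Ideal.span (Set.range a) :=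
        (hmemI _).mpr ⟨x, rfl⟩
      rw [hg', Ideal.mem_span_singleton] at hM
      obtain ⟨k, hk⟩ := hM
      refine ⟨k, ?_⟩
      rw [hsum x, hk]
      push_cast
      ring
    · rintro ⟨k, rfl⟩
      have : g * k ∈ Ideal.span (Set.range a) := by
        rw [hg', Ideal.mem_span_singleton]
        exact dvd_mul_right g k
      obtain ⟨x, hx⟩ := (hmemI _).mp this
      refine ⟨x, ?_⟩
      rw [hsum x, hx]
      push_cast
      ring
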